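/- Fix p ∈ ℕ, p ≥ 1. Let v : ℝ × ℤ → ℂ be differentiable in t, with 1 − v(t,n)² ≠ 0 and 1 + v(t,n)² ≠ 0 for all (t,n). Define u := 2v/(1 − v²) and w := (1 + v²)/(1 − v²) (so w² = 1 + u² automatically). Then v satisfies the rational equation v_t = (1+v²) ( Π_{k=1}^{p−1} ((1+v_k²)/(1−v_k²)) · v_p/(1−v_p²) − Π_{k=1}^{p−1} ((1+v_{−k}²)/(1−v_{−k}²)) · v_{−p}/(1−v_{−p}²) ) if and only if u satisfies u_t = (1+u²) ( u_p Π_{k=1}^{p−1} w_k − u_{−p} Π_{k=1}^{p−1} w_{−k} ), where a_k := a(t, n+k). -/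

import Mathlib

lemma deriv_u_aux (f : ℝ → ℂ) (hf : Differentiable ℝ f) (t : ℝ)
    (h1 : 1 - f t ^ 2 ≠ 0) :
    deriv (fun s => 2 * f s / (1 - f s ^ 2)) t
      = 2 * (1 + f t ^ 2) / (1 - f t ^ 2) ^ 2 * deriv f t := by
  have h := (hf t).hasDerivAt
  have h2 : HasDerivAt (fun s => 2 * f s) (2 * deriv f t) t := h.const_mul 2
  have hsq : HasDerivAt (fun s => f s ^ 2) (deriv f t * f t + f t * deriv f t) t := by
    simp only [sq]
    exact h.mul h
  have h3 := hsq.const_sub (1 : ℂ)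
  have hd : HasDerivAt (fun s => 2 * f s / (1 - f s ^ 2)) _ t := h2.div h3 h1
  rw [hd.deriv]
  field_simp
  ring

theorem rational_form_equivalence (p : ℕ) (hp : 1 ≤ p) (v : ℝ × ℤ → ℂ)
    (hv : ∀ n : ℤ, Differentiable ℝ (fun t : ℝ => v (t, n)))
    (hv1 : ∀ (t : ℝ) (n : ℤ), 1 - v (t, n)^2 ≠ 0)
    (hv2 : ∀ (t : ℝ) (n : ℤ), 1 + v (t, n)^2 ≠ 0) :
    let u : ℝ × ℤ → ℂ := fun q => 2 * v q / (1 - v q ^ 2)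
    let w : ℝ × ℤ → ℂ := fun q => (1 + v q ^ 2) / (1 - v q ^ 2)
    (∀ (t : ℝ) (n : ℤ), deriv (fun s : ℝ => v (s, n)) t
        = (1 + v (t, n)^2) *
            ((∏ k ∈ Finset.Icc 1 (p-1),
                ((1 + v (t, n + (k:ℤ))^2) / (1 - v (t, n + (k:ℤ))^2)))
                * (v (t, n + (p:ℤ)) / (1 - v (t, n + (p:ℤ))^2))
              - (∏ k ∈ Finset.Icc 1 (p-1),
                  ((1 + v (t, n - (k:ℤ))^2) / (1 - v (t, n - (k:ℤ))^2)))
                  * (v (t, n - (p:ℤ)) / (1 - v (t, n - (p:ℤ))^2))))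
      ↔ (∀ (t : ℝ) (n : ℤ), deriv (fun s : ℝ => u (s, n)) t
          = (1 + u (t, n)^2) *
              (u (t, n + (p:ℤ)) * ∏ k ∈ Finset.Icc 1 (p-1), w (t, n + (k:ℤ))
                - u (t, n - (p:ℤ)) * ∏ k ∈ Finset.Icc 1 (p-1), w (t, n - (k:ℤ)))) := by
  intro u w
  refine forall₂_congr fun t n => ?_
  have hderiv : deriv (fun s : ℝ => u (s, n)) t
      = 2 * (1 + v (t, n) ^ 2) / (1 - v (t, n) ^ 2) ^ 2
          * deriv (fun s : ℝ => v (s, n)) t :=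
    deriv_u_aux (fun s => v (s, n)) (hv n) t (hv1 t n)
  set c : ℂ := 2 * (1 + v (t, n) ^ 2) / (1 - v (t, n) ^ 2) ^ 2 with hc
  have hcne : c ≠ 0 := by
    rw [hc]
    exact div_ne_zero (mul_ne_zero two_ne_zero (hv2 t n)) (pow_ne_zero 2 (hv1 t n))
  rw [hderiv]
  have hident : (1 + u (t, n)^2) *
        (u (t, n + (p:ℤ)) * ∏ k ∈ Finset.Icc 1 (p-1), w (t, n + (k:ℤ))
          - u (t, n - (p:ℤ)) * ∏ k ∈ Finset.Icc 1 (p-1), w (t, n - (k:ℤ)))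
      = c * ((1 + v (t, n)^2) *
            ((∏ k ∈ Finset.Icc 1 (p-1),
                ((1 + v (t, n + (k:ℤ))^2) / (1 - v (t, n + (k:ℤ))^2)))
                * (v (t, n + (p:ℤ)) / (1 - v (t, n + (p:ℤ))^2))
              - (∏ k ∈ Finset.Icc 1 (p-1),
                  ((1 + v (t, n - (k:ℤ))^2) / (1 - v (t, n - (k:ℤ))^2)))
                  * (v (t, n - (p:ℤ)) / (1 - v (t, n - (p:ℤ))^2)))) := by
    simp only [u, w, hc]
    generalize (∏ k ∈ Finset.Icc 1 (p-1),
        ((1 + v (t, n + (k:ℤ))^2) / (1 - v (t, n + (k:ℤ))^2))) = P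
    generalize (∏ k ∈ Finset.Icc 1 (p-1),
        ((1 + v (t, n - (k:ℤ))^2) / (1 - v (t, n - (k:ℤ))^2))) = Q
    have h0 := hv1 t n
    have hb := hv1 t (n + (p:ℤ))
    have hc' := hv1 t (n - (p:ℤ))
    field_simp
    ring
  rw [hident]
  exact (mul_right_inj' hcne).symm
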